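/- Let T be a rooted phylogenetic X-tree whose positive edge lengths satisfy the ultrametric condition, and let A ⊆ X with |A| = k. Then A is a size-k maxPD set if and only if A contains at least one leaf from each connected component of the forest T[R(d_{k⁻})] and at most one leaf from each connected component of the forest T[R(d_{k⁺})]. -/

import Mathlib

/-!
Rooted phylogenetic `X`-trees with positive edge lengths.

A tree on a finite vertex type `V` is encoded by its parent function: the root
has no parent, every other vertex has one, and iterating the parent function
reaches the root.  The edge into a non-root vertex `v` has length `len v`, and
`hgt v` is the distance from the root to `v`.  Leaves are the vertices with no
children; the taxon set `X` of the paper is the set `leaves` of leaves.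
Every non-leaf, non-root vertex has out-degree (number of children) at least 2.
-/

noncomputable section

attribute [local instance] Classical.propDecidable

structure PhyloTree (V : Type) [Fintype V] [DecidableEq V] where
  root : V
  parent : V → Option V
  len : V → ℝ
  hgt : V → ℝ
  parent_root : parent root = none
  parent_isSome : ∀ v, v ≠ root → (parent v).isSome
  reaches_root : ∀ v, Relation.ReflTransGen (fun a b => parent a = some b) v root
  hgt_root : hgt root = 0
  hgt_eq : ∀ v u, parent v = some u → hgt v = hgt u + len v
  len_pos : ∀ v, v ≠ root → 0 < len v
  outdeg_ge_two : ∀ v, v ≠ root → (∃ u, parent u = some v) →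
    2 ≤ Set.ncard {u | parent u = some v}

namespace PhyloTree

variable {V : Type} [Fintype V] [DecidableEq V]

/-- `T.step a b` : `b` is the parent of `a`. -/
def step (T : PhyloTree V) (a b : V) : Prop := T.parent a = some b

/-- `T.anc u v` : `u` is an ancestor of `v`, i.e. `u` lies on the (unique) path
from the root to `v` (reflexively). -/
def anc (T : PhyloTree V) (u v : V) : Prop := Relation.ReflTransGen T.step v u

/-- a leaf is a vertex with no children. -/
def IsLeaf (T : PhyloTree V) (v : V) : Prop := ∀ u, T.parent u ≠ some v

/-- the leaf set (the taxon set `X`). -/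
def leaves (T : PhyloTree V) : Set V := {v | T.IsLeaf v}

/-- Phylogenetic diversity of a set `Y`: the total length of all edges `e`
whose set of descendant leaves meets `Y` (the edge into a non-root vertex `v`
has length `T.len v`). -/
def PD (T : PhyloTree V) (Y : Set V) : ℝ :=
  ∑ v : V, if v ≠ T.root ∧ ∃ x ∈ Y, T.IsLeaf x ∧ T.anc v x then T.len v else 0

/-- the ultrametric condition: all leaves are at the same distance from the root. -/
def Ultrametric (T : PhyloTree V) : Prop :=
  ∀ x y, T.IsLeaf x → T.IsLeaf y → T.hgt x = T.hgt y

/-- `R d`: the set of vertices within distance `d` above some leaf. -/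
def R (T : PhyloTree V) (d : ℝ) : Set V :=
  {v | ∃ x, T.IsLeaf x ∧ T.anc v x ∧ T.hgt x - T.hgt v ≤ d}

/-- adjacency in the forest induced by `T` on a vertex set `S`. -/
def adjIn (T : PhyloTree V) (S : Set V) (u v : V) : Prop :=
  u ∈ S ∧ v ∈ S ∧ (T.parent u = some v ∨ T.parent v = some u)

/-- the connected components of the forest induced by `T` on `S`. -/
def components (T : PhyloTree V) (S : Set V) : Set (Set V) :=
  {C | ∃ v ∈ S, C = S ∩ {u | Relation.ReflTransGen (T.adjIn S) v u}}

/-- `c d`: the number of connected components of the forest `T[R(d)]`. -/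
def ccount (T : PhyloTree V) (d : ℝ) : ℕ := (T.components (T.R d)).ncard

/-- `k` is a branching value if `T[R(d)]` has exactly `k` components for some `d ≥ 0`. -/
def IsBranchingValue (T : PhyloTree V) (k : ℕ) : Prop := ∃ d : ℝ, 0 ≤ d ∧ T.ccount d = k

/-- the branching distance `d_k = min {d : c(d) = k}`. -/
def branchDist (T : PhyloTree V) (k : ℕ) : ℝ := sInf {d | 0 ≤ d ∧ T.ccount d = k}

/-- `k⁻`: the largest branching value `≤ k`. -/
def kminus (T : PhyloTree V) (k : ℕ) : ℕ := sSup {j | j ≤ k ∧ T.IsBranchingValue j}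

/-- `k⁺`: the smallest branching value `≥ k`. -/
def kplus (T : PhyloTree V) (k : ℕ) : ℕ := sInf {j | k ≤ j ∧ T.IsBranchingValue j}

/-- `A` is a size-`k` maxPD set. -/
def IsMaxPD (T : PhyloTree V) (k : ℕ) (A : Set V) : Prop :=
  A ⊆ T.leaves ∧ A.ncard = k ∧ ∀ Y ⊆ T.leaves, Y.ncard = k → T.PD Y ≤ T.PD A

/-- `A` is a size-`k` minPD set. -/
def IsMinPD (T : PhyloTree V) (k : ℕ) (A : Set V) : Prop :=
  A ⊆ T.leaves ∧ A.ncard = k ∧ ∀ Y ⊆ T.leaves, Y.ncard = k → T.PD A ≤ T.PD Y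

/-- `m T k`: the number of size-`k` maxPD sets of `T`. -/
def m (T : PhyloTree V) (k : ℕ) : ℕ := {A : Set V | T.IsMaxPD k A}.ncard

/-- `T` is binary: every non-leaf vertex has exactly two children. -/
def Binary (T : PhyloTree V) : Prop :=
  ∀ v, ¬ T.IsLeaf v → Set.ncard {u | T.parent u = some v} = 2

end PhyloTree

/-- successor of `t` in a finite set of reals. -/
def nxtF (L : Finset ℝ) (t : ℝ) : ℝ :=
  if h : (L.filter (fun s => t < s)).Nonempty then (L.filter (fun s => t < s)).min' h else t

lemma nxtF_spec {L : Finset ℝ} {t b : ℝ} (hb : b ∈ L) (htb : t < b) :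
    nxtF L t ∈ L ∧ t < nxtF L t ∧ ∀ s ∈ L, t < s → nxtF L t ≤ s := by
  have hne : (L.filter (fun s => t < s)).Nonempty := ⟨b, Finset.mem_filter.mpr ⟨hb, htb⟩⟩
  rw [nxtF, dif_pos hne]
  have hmem := Finset.min'_mem _ hne
  rw [Finset.mem_filter] at hmem
  exact ⟨hmem.1, hmem.2, fun s hs hts => Finset.min'_le _ _ (Finset.mem_filter.mpr ⟨hs, hts⟩)⟩

lemma teleF (L : Finset ℝ) : ∀ n (a b : ℝ), (L.filter (fun t => a ≤ t ∧ t < b)).card ≤ n →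
    a ∈ L → b ∈ L → a ≤ b →
    (∑ t ∈ L.filter (fun t => a ≤ t ∧ t < b), (nxtF L t - t)) = b - a := by
  intro n
  induction n with
  | zero =>
    intro a b hc ha hb hab
    rcases eq_or_lt_of_le hab with rfl | hlt
    · have : L.filter (fun t => a ≤ t ∧ t < a) = ∅ := by
        ext t; simp only [Finset.mem_filter, Finset.notMem_empty, iff_false, not_and]
        intro _ h1 h2; linarith
      rw [this]; simp
    · exfalso
      have : a ∈ L.filter (fun t => a ≤ t ∧ t < b) :=
        Finset.mem_filter.mpr ⟨ha, le_rfl, hlt⟩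
      have := Finset.card_pos.mpr ⟨a, this⟩
      omega
  | succ n ih =>
    intro a b hc ha hb hab
    rcases eq_or_lt_of_le hab with rfl | hlt
    · have : L.filter (fun t => a ≤ t ∧ t < a) = ∅ := by
        ext t; simp only [Finset.mem_filter, Finset.notMem_empty, iff_false, not_and]
        intro _ h1 h2; linarith
      rw [this]; simp
    · obtain ⟨ha'L, haa', ha'min⟩ := nxtF_spec hb hlt
      set a' := nxtF L a with ha'def
      have ha'le : a' ≤ b := ha'min b hb hlt
      have hsplit : L.filter (fun t => a ≤ t ∧ t < b)
          = insert a (L.filter (fun t => a' ≤ t ∧ t < b)) := by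
        ext t
        simp only [Finset.mem_filter, Finset.mem_insert]
        constructor
        · rintro ⟨htL, hat, htb⟩
          rcases eq_or_lt_of_le hat with rfl | hat'
          · exact Or.inl rfl
          · exact Or.inr ⟨htL, ha'min t htL hat', htb⟩
        · rintro (rfl | ⟨htL, h1, h2⟩)
          · exact ⟨ha, le_rfl, hlt⟩
          · exact ⟨htL, by linarith, h2⟩
      have hanotin : a ∉ L.filter (fun t => a' ≤ t ∧ t < b) := by
        simp only [Finset.mem_filter, not_and]
        intro _ h1 h2; linarith
      have hcard : (L.filter (fun t => a' ≤ t ∧ t < b)).card ≤ n := by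
        rw [hsplit, Finset.card_insert_of_notMem hanotin] at hc
        omega
      rw [hsplit, Finset.sum_insert hanotin, ih a' b hcard ha'L hb ha'le]
      ring

lemma teleF' (L : Finset ℝ) {a b : ℝ} (ha : a ∈ L) (hb : b ∈ L) (hab : a ≤ b) :
    (∑ t ∈ L.filter (fun t => a ≤ t ∧ t < b), (nxtF L t - t)) = b - a :=
  teleF L _ a b le_rfl ha hb hab

namespace PhyloTree

variable {V : Type} [Fintype V] [DecidableEq V]


lemma step_ne_root (T : PhyloTree V) {a b : V} (h : T.step a b) : a ≠ T.root := by
  intro rfl'; rw [rfl'] at h; simp [step, T.parent_root] at h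

lemma anc_refl (T : PhyloTree V) (v : V) : T.anc v v := Relation.ReflTransGen.refl

lemma anc_trans (T : PhyloTree V) {u v w : V} (h1 : T.anc u v) (h2 : T.anc v w) :
    T.anc u w := Relation.ReflTransGen.trans h2 h1

lemma anc_root (T : PhyloTree V) (v : V) : T.anc T.root v := T.reaches_root v

lemma anc_hgt (T : PhyloTree V) {u v : V} (h : T.anc u v) :
    u = v ∨ T.hgt u < T.hgt v := by
  induction h with
  | refl => exact Or.inl rfl
  | tail h1 h2 ih =>
    right
    have hne := T.step_ne_root h2
    have := T.hgt_eq _ _ h2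
    have hlen := T.len_pos _ hne
    rcases ih with rfl | hlt
    · linarith
    · linarith

lemma hgt_le_of_anc (T : PhyloTree V) {u v : V} (h : T.anc u v) : T.hgt u ≤ T.hgt v := by
  rcases T.anc_hgt h with rfl | h; exacts [le_rfl, h.le]

lemma hgt_lt_of_anc (T : PhyloTree V) {u v : V} (h : T.anc u v) (hne : u ≠ v) :
    T.hgt u < T.hgt v := by
  rcases T.anc_hgt h with rfl | h; exacts [absurd rfl hne, h]

lemma hgt_nonneg (T : PhyloTree V) (v : V) : 0 ≤ T.hgt v := by
  have := T.hgt_le_of_anc (T.anc_root v); rwa [T.hgt_root] at this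

lemma anc_antisymm (T : PhyloTree V) {u v : V} (h1 : T.anc u v) (h2 : T.anc v u) :
    u = v := by
  rcases T.anc_hgt h1 with rfl | hlt; · rfl
  have := T.hgt_le_of_anc h2; linarith

lemma anc_step_first (T : PhyloTree V) {u m p : V} (h : T.anc u m) (hne : u ≠ m)
    (hp : T.parent m = some p) : T.anc u p := by
  rcases Relation.ReflTransGen.cases_head h with rfl | ⟨y, hy, h2⟩
  · exact absurd rfl hne.symm
  · have : y = p := by
      have : T.parent m = some y := hy
      rw [hp] at this; exact (Option.some.inj this).symm
    rwa [this] at h2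

lemma anc_comparable (T : PhyloTree V) : ∀ {x u w : V}, T.anc u x → T.anc w x →
    T.anc u w ∨ T.anc w u := by
  intro x u w h1
  induction h1 using Relation.ReflTransGen.head_induction_on with
  | refl => intro h2; exact Or.inr h2
  | head hstep hrest ih =>
    intro h2
    rcases Relation.ReflTransGen.cases_head h2 with rfl | ⟨y, hy, h2'⟩
    · exact Or.inl (Relation.ReflTransGen.head hstep hrest)
    · have : y = _ := Option.some.inj ((hy.symm.trans hstep))
      exact ih (this ▸ h2')

lemma exists_leaf_desc (T : PhyloTree V) : ∀ v, ∃ x, T.IsLeaf x ∧ T.anc v x := by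
  have main : ∀ n (v : V), ({w | T.anc v w}).ncard ≤ n → ∃ x, T.IsLeaf x ∧ T.anc v x := by
    intro n
    induction n with
    | zero =>
      intro v h
      exfalso
      have hmem : v ∈ {w | T.anc v w} := T.anc_refl v
      have : ({w | T.anc v w}).ncard ≠ 0 := by
        intro h0
        rw [Set.ncard_eq_zero (Set.toFinite _)] at h0
        rw [h0] at hmem; exact hmem
      omega
    | succ n ih =>
      intro v h
      by_cases hv : T.IsLeaf v
      · exact ⟨v, hv, T.anc_refl v⟩
      · have : ∃ u, T.parent u = some v := by
          simp only [IsLeaf, not_forall, not_not] at hv; exact hv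
        obtain ⟨u, hu⟩ := this
        have hvu : T.anc v u := Relation.ReflTransGen.single hu
        have hune : u ≠ v := by
          intro rfl'
          subst rfl'
          have := T.hgt_eq _ _ hu
          have := T.len_pos _ (T.step_ne_root (show T.step u u from hu))
          linarith
        have hsub : {w | T.anc u w} ⊆ {w | T.anc v w} := fun w hw => T.anc_trans hvu hw
        have hnm : v ∉ {w | T.anc u w} := by
          intro hvm
          exact hune (T.anc_antisymm hvm hvu)
        have hss : {w | T.anc u w} ⊂ {w | T.anc v w} :=
          ⟨hsub, fun hc => hnm (hc (T.anc_refl v))⟩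
        have hlt := Set.ncard_lt_ncard hss (Set.toFinite _)
        obtain ⟨x, hx1, hx2⟩ := ih u (by omega)
        exact ⟨x, hx1, T.anc_trans hvu hx2⟩
  exact fun v => main _ v le_rfl



section Ultra

variable (T : PhyloTree V) {H : ℝ}

/-- the set of maximal vertices of `T[R(d)]`. -/
def Mx (d : ℝ) : Set V := {m | m ∈ T.R d ∧ ∀ p, T.parent m = some p → p ∉ T.R d}

/-- the maximal vertex of `T[R(d)]` above `v` (junk value if `v ∉ R d`). -/
def topF (d : ℝ) (v : V) : V :=
  if h : ∃ m, T.anc m v ∧ m ∈ T.Mx d then h.choose else v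


/-- the finite set of threshold values `H - hgt v`. -/
def thr (H' : ℝ) : Finset ℝ := Finset.image (fun v => H' - T.hgt v) Finset.univ

/-- height of the parent (junk `0` at the root). -/
def phgt (v : V) : ℝ := ((T.parent v).map T.hgt).getD 0

/-- the number of components of `T[R(d)]` meeting `Y`. -/
def gcnt (d : ℝ) (Y : Set V) : ℕ := (T.topF d '' Y).ncard

variable (hH : ∀ x, T.IsLeaf x → T.hgt x = H)

include hH

lemma hgt_le_H (v : V) : T.hgt v ≤ H := by
  obtain ⟨x, hx, hanc⟩ := T.exists_leaf_desc v
  have := T.hgt_le_of_anc hanc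
  rwa [hH x hx] at this

lemma H_nonneg : 0 ≤ H := by
  obtain ⟨x, hx, _⟩ := T.exists_leaf_desc T.root
  rw [← hH x hx]; exact T.hgt_nonneg x

lemma mem_R_iff {v : V} {d : ℝ} : v ∈ T.R d ↔ H - T.hgt v ≤ d := by
  constructor
  · rintro ⟨x, hx, _, hle⟩
    rwa [hH x hx] at hle
  · intro hle
    obtain ⟨x, hx, hanc⟩ := T.exists_leaf_desc v
    exact ⟨x, hx, hanc, by rw [hH x hx]; exact hle⟩

lemma R_mono {d d' : ℝ} (h : d ≤ d') : T.R d ⊆ T.R d' := by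
  intro v hv
  rw [T.mem_R_iff hH] at hv ⊢
  linarith

lemma leaf_mem_R {x : V} {d : ℝ} (hd : 0 ≤ d) (hx : T.IsLeaf x) : x ∈ T.R d := by
  rw [T.mem_R_iff hH, hH x hx]; linarith

lemma R_desc_closed {v w : V} {d : ℝ} (hv : v ∈ T.R d) (h : T.anc v w) : w ∈ T.R d := by
  rw [T.mem_R_iff hH] at hv ⊢
  have := T.hgt_le_of_anc h
  linarith

lemma root_mem_R_iff {d : ℝ} : T.root ∈ T.R d ↔ H ≤ d := by
  rw [T.mem_R_iff hH, T.hgt_root]; simp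

omit hH in
lemma exists_top {v : V} {d : ℝ} (hv : v ∈ T.R d) : ∃ m, T.anc m v ∧ m ∈ T.Mx d := by
  classical
  set S : Set V := {u | T.anc u v ∧ u ∈ T.R d} with hS
  have hfin : S.Finite := Set.toFinite _
  have hne : S.Nonempty := ⟨v, T.anc_refl v, hv⟩
  obtain ⟨m, hm, hmin⟩ := Set.exists_min_image S T.hgt hfin hne
  refine ⟨m, hm.1, hm.2, ?_⟩
  intro p hp hpR
  have hmne : m ≠ T.root := by
    intro rfl'; rw [rfl'] at hp; rw [T.parent_root] at hp; exact nomatch hp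
  have hanc_pm : T.anc p m := Relation.ReflTransGen.single hp
  have hpv : T.anc p v := T.anc_trans hanc_pm hm.1
  have hpS : p ∈ S := ⟨hpv, hpR⟩
  have := hmin p hpS
  have heq := T.hgt_eq _ _ hp
  have := T.len_pos _ hmne
  linarith

lemma top_unique {m m' v : V} {d : ℝ} (h1 : T.anc m v) (hm : m ∈ T.Mx d)
    (h2 : T.anc m' v) (hm' : m' ∈ T.Mx d) : m = m' := by
  have hcmp := T.anc_comparable h1 h2
  -- symmetric argument
  have key : ∀ a b : V, T.anc a b → a ∈ T.Mx d → b ∈ T.Mx d → a = b := by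
    intro a b hab ha hb
    by_contra hne
    have hbroot : b ≠ T.root := by
      intro rfl'
      subst rfl'
      exact hne (T.anc_antisymm hab (T.anc_root a))
    obtain ⟨p, hp⟩ := Option.isSome_iff_exists.mp (T.parent_isSome b hbroot)
    have hap : T.anc a p := T.anc_step_first hab hne hp
    exact hb.2 p hp (T.R_desc_closed hH ha.1 hap)
  rcases hcmp with h | h
  · exact key _ _ h hm hm'
  · exact (key _ _ h hm' hm).symm

omit hH in
lemma topF_spec {v : V} {d : ℝ} (hv : v ∈ T.R d) :
    T.anc (T.topF d v) v ∧ T.topF d v ∈ T.Mx d := by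
  have h := T.exists_top hv
  rw [topF, dif_pos h]
  exact h.choose_spec

lemma topF_eq {m v : V} {d : ℝ} (h1 : T.anc m v) (hm : m ∈ T.Mx d) :
    T.topF d v = m := by
  have hv : v ∈ T.R d := T.R_desc_closed hH hm.1 h1
  have hs := T.topF_spec hv
  exact T.top_unique hH hs.1 hs.2 h1 hm

lemma topF_anc {u v : V} {d : ℝ} (h : T.anc u v) (hu : u ∈ T.R d) :
    T.topF d v = T.topF d u := by
  have hs := T.topF_spec hu
  exact T.topF_eq hH (T.anc_trans hs.1 h) hs.2

omit hH in
lemma Mx_subset_R {d : ℝ} : T.Mx d ⊆ T.R d := fun _ h => h.1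

lemma topF_self {m : V} {d : ℝ} (hm : m ∈ T.Mx d) : T.topF d m = m :=
  T.topF_eq hH (T.anc_refl m) hm

omit hH in
lemma adjIn_symm (S : Set V) : Symmetric (T.adjIn S) := by
  intro a b ⟨h1, h2, h3⟩; exact ⟨h2, h1, h3.symm⟩

lemma rtg_adj_of_anc {m v : V} {d : ℝ} (hm : m ∈ T.R d) (h : T.anc m v) :
    Relation.ReflTransGen (T.adjIn (T.R d)) v m := by
  induction h using Relation.ReflTransGen.head_induction_on with
  | refl => exact Relation.ReflTransGen.refl
  | @head a c hstep hrest ih =>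
    have hcR : c ∈ T.R d := T.R_desc_closed hH hm hrest
    have haR : a ∈ T.R d := T.R_desc_closed hH hcR (Relation.ReflTransGen.single hstep)
    exact Relation.ReflTransGen.head ⟨haR, hcR, Or.inl hstep⟩ ih

lemma component_eq {v : V} {d : ℝ} (hv : v ∈ T.R d) :
    T.R d ∩ {u | Relation.ReflTransGen (T.adjIn (T.R d)) v u} = {u | T.anc (T.topF d v) u} := by
  obtain ⟨htop1, htop2⟩ := T.topF_spec hv
  set m := T.topF d v with hmdef
  ext u
  simp only [Set.mem_inter_iff, Set.mem_setOf_eq]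
  constructor
  · rintro ⟨huR, hconn⟩
    clear huR
    induction hconn with
    | refl => exact htop1
    | @tail w1 w2 h1 h2 ih =>
      obtain ⟨hbR, hcR, hbc⟩ := h2
      rcases hbc with hpb | hpc
      · -- parent b = c : c is above b;  m anc b
        rcases T.anc_comparable ih (Relation.ReflTransGen.single hpb : T.anc w2 w1) with h | h
        · exact h
        · -- c anc m
          by_cases hcm : w2 = m
          · subst hcm; exact T.anc_refl _
          · exfalso
            have hmroot : m ≠ T.root := by
              intro rfl'
              rw [rfl'] at h
              exact hcm ((T.anc_antisymm h (T.anc_root w2)).trans rfl'.symm)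
            obtain ⟨p, hp⟩ := Option.isSome_iff_exists.mp (T.parent_isSome m hmroot)
            have hcp : T.anc w2 p := T.anc_step_first h hcm hp
            exact htop2.2 p hp (T.R_desc_closed hH hcR hcp)
      · -- parent c = b : b is above c
        exact T.anc_trans ih (Relation.ReflTransGen.single hpc)
  · intro hmu
    have hmv : Relation.ReflTransGen (T.adjIn (T.R d)) v m := T.rtg_adj_of_anc hH htop2.1 htop1
    have huR : u ∈ T.R d := T.R_desc_closed hH htop2.1 hmu
    have hum : Relation.ReflTransGen (T.adjIn (T.R d)) u m := T.rtg_adj_of_anc hH htop2.1 hmu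
    have hmu' : Relation.ReflTransGen (T.adjIn (T.R d)) m u :=
      (@Relation.ReflTransGen.stdSymm _ _ ⟨fun _ _ h => T.adjIn_symm (T.R d) h⟩).symm _ _ hum
    exact ⟨huR, hmv.trans hmu'⟩

lemma components_eq {d : ℝ} :
    T.components (T.R d) = (fun m => {u | T.anc m u}) '' (T.Mx d) := by
  ext C
  constructor
  · rintro ⟨v, hv, rfl⟩
    exact ⟨T.topF d v, (T.topF_spec hv).2, (T.component_eq hH hv).symm⟩
  · rintro ⟨m, hm, rfl⟩
    refine ⟨m, hm.1, ?_⟩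
    rw [T.component_eq hH hm.1, T.topF_self hH hm]

omit hH in
lemma desc_injOn_Mx {d : ℝ} : Set.InjOn (fun m : V => {u | T.anc m u}) (T.Mx d) := by
  intro a _ b _ h
  replace h : {u | T.anc a u} = {u | T.anc b u} := h
  have ha : a ∈ {u | T.anc b u} := by rw [← h]; exact T.anc_refl a
  have hb : b ∈ {u | T.anc a u} := by rw [h]; exact T.anc_refl b
  exact T.anc_antisymm hb ha

lemma ccount_eq {d : ℝ} : T.ccount d = (T.Mx d).ncard := by
  rw [ccount, T.components_eq hH, Set.ncard_image_of_injOn (T.desc_injOn_Mx)]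

lemma Mx_zero : T.Mx 0 = T.leaves := by
  ext v
  constructor
  · rintro ⟨hvR, _⟩
    simp only [leaves, Set.mem_setOf_eq]
    by_contra hv
    simp only [IsLeaf, not_forall, not_not] at hv
    obtain ⟨u, hu⟩ := hv
    obtain ⟨x, hx, hanc⟩ := T.exists_leaf_desc u
    have hvx : T.anc v x := T.anc_trans (Relation.ReflTransGen.single hu) hanc
    have hvne : v ≠ x := by
      rintro rfl
      exact hx u hu
    have := T.hgt_lt_of_anc hvx hvne
    rw [T.mem_R_iff hH] at hvR
    rw [hH x hx] at this
    linarith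
  · intro hv
    refine ⟨T.leaf_mem_R hH le_rfl hv, ?_⟩
    intro p hp hpR
    rw [T.mem_R_iff hH] at hpR
    have : T.hgt p < T.hgt v := by
      have := T.hgt_eq _ _ hp
      have := T.len_pos _ (T.step_ne_root (show T.step v p from hp))
      linarith
    rw [hH v hv] at this
    linarith

lemma Mx_top {d : ℝ} (hd : H ≤ d) : T.Mx d = {T.root} := by
  ext v
  simp only [Set.mem_singleton_iff]
  constructor
  · rintro ⟨hvR, hmax⟩
    by_contra hne
    obtain ⟨p, hp⟩ := Option.isSome_iff_exists.mp (T.parent_isSome v hne)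
    refine hmax p hp ?_
    rw [T.mem_R_iff hH]
    have := T.hgt_nonneg p
    linarith
  · rintro rfl
    refine ⟨(T.root_mem_R_iff hH).mpr hd, ?_⟩
    intro p hp
    rw [T.parent_root] at hp
    exact nomatch hp

lemma ccount_top {d : ℝ} (hd : H ≤ d) : T.ccount d = 1 := by
  rw [T.ccount_eq hH, T.Mx_top hH hd, Set.ncard_singleton]

lemma ccount_zero : T.ccount 0 = T.leaves.ncard := by
  rw [T.ccount_eq hH, T.Mx_zero hH]

lemma topF_image_Mx {d d' : ℝ} (hd : 0 ≤ d) (hdd : d ≤ d') :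
    T.topF d' '' (T.Mx d) = T.Mx d' := by
  apply Set.Subset.antisymm
  · rintro _ ⟨m, hm, rfl⟩
    exact (T.topF_spec (T.R_mono hH hdd hm.1)).2
  · intro m' hm'
    obtain ⟨x, hx, hanc⟩ := T.exists_leaf_desc m'
    have hxR : x ∈ T.R d := T.leaf_mem_R hH hd hx
    obtain ⟨hx1, hx2⟩ := T.topF_spec hxR
    refine ⟨T.topF d x, hx2, ?_⟩
    have h1 : T.topF d' x = m' := T.topF_eq hH hanc hm'
    have h2 : T.topF d' x = T.topF d' (T.topF d x) :=
      T.topF_anc hH hx1 (T.R_mono hH hdd hx2.1)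
    rw [← h2, h1]

lemma ccount_antitone {d d' : ℝ} (hd : 0 ≤ d) (hdd : d ≤ d') :
    T.ccount d' ≤ T.ccount d := by
  rw [T.ccount_eq hH, T.ccount_eq hH, ← T.topF_image_Mx hH hd hdd]
  exact Set.ncard_image_le (Set.toFinite _)

lemma injOn_topF_Mx {d d' : ℝ} (hd : 0 ≤ d) (hdd : d ≤ d')
    (hcc : T.ccount d = T.ccount d') : Set.InjOn (T.topF d') (T.Mx d) := by
  apply Set.injOn_of_ncard_image_eq _ (Set.toFinite _)
  rw [T.topF_image_Mx hH hd hdd, ← T.ccount_eq hH, ← T.ccount_eq hH, hcc]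

omit hH in
lemma phgt_eq {v p : V} (hp : T.parent v = some p) : T.phgt v = T.hgt p := by
  rw [phgt, hp]; rfl

omit hH in
lemma phgt_nonneg (v : V) : 0 ≤ T.phgt v := by
  rcases h : T.parent v with _ | p
  · rw [phgt, h]; exact le_rfl
  · rw [T.phgt_eq h]; exact T.hgt_nonneg p

omit hH in
lemma len_eq {v : V} (hv : v ≠ T.root) : T.len v = T.hgt v - T.phgt v := by
  obtain ⟨p, hp⟩ := Option.isSome_iff_exists.mp (T.parent_isSome v hv)
  rw [T.phgt_eq hp]
  have := T.hgt_eq _ _ hp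
  linarith

omit hH in
lemma phgt_lt {v : V} (hv : v ≠ T.root) : T.phgt v < T.hgt v := by
  have := T.len_eq hv
  have := T.len_pos v hv
  linarith

omit hH in
lemma mem_thr (v : V) : H - T.hgt v ∈ T.thr H := by
  rw [thr, Finset.mem_image]; exact ⟨v, Finset.mem_univ v, rfl⟩

lemma zero_mem_thr : (0 : ℝ) ∈ T.thr H := by
  obtain ⟨x, hx, _⟩ := T.exists_leaf_desc T.root
  have := T.mem_thr (H := H) x
  rwa [hH x hx, sub_self] at this

omit hH in
lemma H_mem_thr : H ∈ T.thr H := by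
  have := T.mem_thr (H := H) T.root
  rwa [T.hgt_root, sub_zero] at this

lemma thr_nonneg {t : ℝ} (ht : t ∈ T.thr H) : 0 ≤ t := by
  rw [thr, Finset.mem_image] at ht
  obtain ⟨v, _, rfl⟩ := ht
  have := T.hgt_le_H hH v
  linarith

omit hH in
lemma thr_le_H {t : ℝ} (ht : t ∈ T.thr H) : t ≤ H := by
  rw [thr, Finset.mem_image] at ht
  obtain ⟨v, _, rfl⟩ := ht
  have := T.hgt_nonneg v
  linarith

lemma mem_topF_image_iff {Y : Set V} (hY : Y ⊆ T.leaves) {t : ℝ} (ht0 : 0 ≤ t)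
    (htH : t < H) {v : V} :
    v ∈ T.topF t '' Y ↔
      (v ≠ T.root ∧ ∃ x ∈ Y, T.IsLeaf x ∧ T.anc v x) ∧
        H - T.hgt v ≤ t ∧ t < H - T.phgt v := by
  constructor
  · rintro ⟨y, hy, rfl⟩
    have hyR : y ∈ T.R t := T.leaf_mem_R hH ht0 (hY hy)
    obtain ⟨hanc, hMx⟩ := T.topF_spec hyR
    have hvroot : T.topF t y ≠ T.root := by
      intro hr
      have : T.root ∈ T.R t := hr ▸ hMx.1
      rw [T.root_mem_R_iff hH] at this
      linarith
    obtain ⟨p, hp⟩ := Option.isSome_iff_exists.mp (T.parent_isSome _ hvroot)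
    have hpR := hMx.2 p hp
    rw [T.mem_R_iff hH] at hpR
    push_neg at hpR
    refine ⟨⟨hvroot, y, hy, hY hy, hanc⟩, ?_, ?_⟩
    · exact (T.mem_R_iff hH).mp hMx.1
    · rw [T.phgt_eq hp]; exact hpR
  · rintro ⟨⟨hvroot, x, hxY, hxl, hanc⟩, h1, h2⟩
    obtain ⟨p, hp⟩ := Option.isSome_iff_exists.mp (T.parent_isSome _ hvroot)
    have hvMx : v ∈ T.Mx t := by
      refine ⟨(T.mem_R_iff hH).mpr h1, ?_⟩
      intro p' hp'
      rw [hp] at hp'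
      cases Option.some.inj hp'
      rw [T.mem_R_iff hH]
      rw [T.phgt_eq hp] at h2
      push_neg
      linarith
    exact ⟨x, hxY, T.topF_eq hH hanc hvMx⟩

lemma PD_eq {Y : Set V} (hY : Y ⊆ T.leaves) :
    T.PD Y = ∑ t ∈ (T.thr H).filter (fun t => t < H),
      (nxtF (T.thr H) t - t) * ((T.gcnt t Y : ℝ)) := by
  classical
  rw [PD]
  have step1 : ∀ v : V,
      (if v ≠ T.root ∧ ∃ x ∈ Y, T.IsLeaf x ∧ T.anc v x then T.len v else 0)
      = ∑ t ∈ T.thr H, (if (v ≠ T.root ∧ ∃ x ∈ Y, T.IsLeaf x ∧ T.anc v x) ∧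
          H - T.hgt v ≤ t ∧ t < H - T.phgt v then nxtF (T.thr H) t - t else 0) := by
    intro v
    by_cases hP : v ≠ T.root ∧ ∃ x ∈ Y, T.IsLeaf x ∧ T.anc v x
    · rw [if_pos hP]
      have hsum : ∑ t ∈ T.thr H, (if (v ≠ T.root ∧ ∃ x ∈ Y, T.IsLeaf x ∧ T.anc v x) ∧
          H - T.hgt v ≤ t ∧ t < H - T.phgt v then nxtF (T.thr H) t - t else 0)
          = ∑ t ∈ (T.thr H).filter (fun t => H - T.hgt v ≤ t ∧ t < H - T.phgt v),
            (nxtF (T.thr H) t - t) := by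
        rw [Finset.sum_filter]
        apply Finset.sum_congr rfl
        intro t _
        by_cases h : H - T.hgt v ≤ t ∧ t < H - T.phgt v
        · rw [if_pos ⟨hP, h⟩, if_pos h]
        · rw [if_neg (fun hc => h hc.2), if_neg h]
      rw [hsum]
      have ha : H - T.hgt v ∈ T.thr H := T.mem_thr v
      have hb : H - T.phgt v ∈ T.thr H := by
        obtain ⟨p, hp⟩ := Option.isSome_iff_exists.mp (T.parent_isSome v hP.1)
        rw [T.phgt_eq hp]; exact T.mem_thr p
      have hab : H - T.hgt v ≤ H - T.phgt v := by
        have := T.phgt_lt hP.1; linarith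
      rw [teleF' _ ha hb hab, T.len_eq hP.1]
      ring
    · rw [if_neg hP]
      symm
      apply Finset.sum_eq_zero
      intro t _
      rw [if_neg (fun hc => hP hc.1)]
  rw [Finset.sum_congr rfl (fun v _ => step1 v), Finset.sum_comm]
  have step2 : ∀ t ∈ T.thr H, (∑ v : V, if (v ≠ T.root ∧ ∃ x ∈ Y, T.IsLeaf x ∧ T.anc v x) ∧
      H - T.hgt v ≤ t ∧ t < H - T.phgt v then nxtF (T.thr H) t - t else 0)
      = (if t < H then (T.gcnt t Y : ℝ) * (nxtF (T.thr H) t - t) else 0) := by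
    intro t ht
    rw [← Finset.sum_filter, Finset.sum_const, nsmul_eq_mul]
    by_cases htH : t < H
    · have hset : ((Finset.univ.filter (fun v => (v ≠ T.root ∧ ∃ x ∈ Y, T.IsLeaf x ∧ T.anc v x) ∧
          H - T.hgt v ≤ t ∧ t < H - T.phgt v)) : Set V) = T.topF t '' Y := by
        ext v
        simp only [Finset.coe_filter, Finset.mem_univ, true_and, Set.mem_setOf_eq]
        exact (T.mem_topF_image_iff hH hY (T.thr_nonneg hH ht) htH).symm
      rw [if_pos htH, gcnt, ← hset, Set.ncard_coe_finset]
    · rw [if_neg htH]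
      have : Finset.univ.filter (fun v => (v ≠ T.root ∧ ∃ x ∈ Y, T.IsLeaf x ∧ T.anc v x) ∧
          H - T.hgt v ≤ t ∧ t < H - T.phgt v) = ∅ := by
        ext v
        simp only [Finset.mem_filter, Finset.notMem_empty, iff_false, not_and]
        push_neg at htH
        intro _ _ _
        push_neg
        have := T.phgt_nonneg v
        linarith
      rw [this]
      simp
  rw [Finset.sum_congr rfl step2, ← Finset.sum_filter]
  apply Finset.sum_congr rfl
  intro t _
  ring

omit hH in
lemma ccount_congr {d e : ℝ} (h : T.R e = T.R d) : T.ccount e = T.ccount d := by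
  rw [ccount, ccount, h]

lemma R_locally_const (d : ℝ) : ∃ ε > 0, ∀ e, d ≤ e → e < d + ε → T.R e = T.R d := by
  classical
  set S := Finset.univ.filter (fun v : V => d < H - T.hgt v) with hS
  by_cases hne : S.Nonempty
  · have hne' : (S.image (fun v => H - T.hgt v - d)).Nonempty := hne.image _
    set ε := (S.image (fun v => H - T.hgt v - d)).min' hne' with hεdef
    have hεpos : 0 < ε := by
      have hmem := Finset.min'_mem (S.image (fun v => H - T.hgt v - d)) hne'
      rw [Finset.mem_image] at hmem
      obtain ⟨v, hv, hveq⟩ := hmem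
      rw [hS, Finset.mem_filter] at hv
      rw [hεdef, ← hveq]
      linarith [hv.2]
    refine ⟨ε, hεpos, ?_⟩
    intro e hde hlt
    apply Set.Subset.antisymm
    · intro v hv
      rw [T.mem_R_iff hH] at hv ⊢
      by_contra hc
      push_neg at hc
      have hvS : v ∈ S := by rw [hS, Finset.mem_filter]; exact ⟨Finset.mem_univ v, hc⟩
      have : ε ≤ H - T.hgt v - d := Finset.min'_le _ _ (Finset.mem_image_of_mem _ hvS)
      linarith
    · exact T.R_mono hH hde
  · refine ⟨1, one_pos, ?_⟩
    intro e hde _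
    apply Set.Subset.antisymm
    · intro v hv
      rw [T.mem_R_iff hH] at hv ⊢
      by_contra hc
      push_neg at hc
      exact hne ⟨v, by rw [hS, Finset.mem_filter]; exact ⟨Finset.mem_univ v, hc⟩⟩
    · exact T.R_mono hH hde

lemma branchDist_spec {j : ℕ} (hj : T.IsBranchingValue j) :
    0 ≤ T.branchDist j ∧ T.ccount (T.branchDist j) = j := by
  obtain ⟨d1, hd1, hc1⟩ := hj
  set S : Set ℝ := {d | 0 ≤ d ∧ T.ccount d = j} with hSdef
  have hSne : S.Nonempty := ⟨d1, hd1, hc1⟩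
  have hbdd : BddBelow S := ⟨0, fun d hd => hd.1⟩
  have h0 : 0 ≤ sInf S := le_csInf hSne (fun d hd => hd.1)
  obtain ⟨ε, hε, heq⟩ := T.R_locally_const hH (sInf S)
  have hex : ∃ e ∈ S, e < sInf S + ε := by
    by_contra hc
    push_neg at hc
    have : sInf S + ε ≤ sInf S := le_csInf hSne hc
    linarith
  obtain ⟨e, heS, helt⟩ := hex
  have hle : sInf S ≤ e := csInf_le hbdd heS
  have hRe : T.R e = T.R (sInf S) := heq e hle helt
  have hcc : T.ccount (sInf S) = j := by
    rw [← T.ccount_congr hRe]; exact heS.2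
  exact ⟨h0, hcc⟩

lemma branchDist_mem_thr {j : ℕ} (hj : T.IsBranchingValue j) :
    T.branchDist j ∈ T.thr H := by
  classical
  obtain ⟨hd0, hcc⟩ := T.branchDist_spec hH hj
  set d₀ := T.branchDist j with hd₀def
  by_cases h0 : d₀ = 0
  · rw [h0]; exact T.zero_mem_thr hH
  by_contra hnot
  have hd0pos : 0 < d₀ := lt_of_le_of_ne hd0 (Ne.symm h0)
  obtain ⟨x, hx, _⟩ := T.exists_leaf_desc T.root
  have hxR : x ∈ T.R d₀ := T.leaf_mem_R hH hd0 hx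
  have hRne : (Finset.univ.filter (fun v : V => v ∈ T.R d₀)).Nonempty :=
    ⟨x, Finset.mem_filter.mpr ⟨Finset.mem_univ x, hxR⟩⟩
  have hne' : ((Finset.univ.filter (fun v : V => v ∈ T.R d₀)).image
      (fun v => d₀ - (H - T.hgt v))).Nonempty := hRne.image _
  set δ₁ := ((Finset.univ.filter (fun v : V => v ∈ T.R d₀)).image
      (fun v => d₀ - (H - T.hgt v))).min' hne' with hδ₁def
  have hδ₁pos : 0 < δ₁ := by
    have hmem := Finset.min'_mem _ hne'
    rw [Finset.mem_image] at hmem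
    obtain ⟨v, hv, hveq⟩ := hmem
    rw [Finset.mem_filter] at hv
    have h1 : H - T.hgt v ≤ d₀ := (T.mem_R_iff hH).mp hv.2
    have h2 : H - T.hgt v ≠ d₀ := by
      intro hc
      exact hnot (hc ▸ T.mem_thr v)
    rw [hδ₁def, ← hveq]
    have := lt_of_le_of_ne h1 h2
    linarith
  set δ := min δ₁ d₀ with hδdef
  have hδpos : 0 < δ := lt_min hδ₁pos hd0pos
  set e := d₀ - δ / 2 with hedef
  have he0 : 0 ≤ e := by
    have : δ ≤ d₀ := min_le_right _ _
    rw [hedef]; linarith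
  have hed : e < d₀ := by rw [hedef]; linarith
  have hRe : T.R e = T.R d₀ := by
    apply Set.Subset.antisymm
    · exact T.R_mono hH hed.le
    · intro v hv
      have hvmem : v ∈ Finset.univ.filter (fun v : V => v ∈ T.R d₀) :=
        Finset.mem_filter.mpr ⟨Finset.mem_univ v, hv⟩
      have : δ₁ ≤ d₀ - (H - T.hgt v) :=
        Finset.min'_le _ _ (Finset.mem_image_of_mem _ hvmem)
      have hδle : δ ≤ δ₁ := min_le_left _ _
      rw [T.mem_R_iff hH]
      rw [hedef]
      linarith
  have heS : e ∈ {d : ℝ | 0 ≤ d ∧ T.ccount d = j} := ⟨he0, by rw [T.ccount_congr hRe]; exact hcc⟩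
  have : d₀ ≤ e := csInf_le ⟨0, fun d hd => hd.1⟩ heS
  linarith

lemma one_isBranching : T.IsBranchingValue 1 :=
  ⟨H, T.H_nonneg hH, T.ccount_top hH le_rfl⟩

lemma n_isBranching : T.IsBranchingValue T.leaves.ncard :=
  ⟨0, le_rfl, T.ccount_zero hH⟩

lemma kminus_spec {k : ℕ} (hk : 1 ≤ k) :
    T.kminus k ≤ k ∧ T.IsBranchingValue (T.kminus k) ∧
      ∀ j, j ≤ k → T.IsBranchingValue j → j ≤ T.kminus k := by
  have hne : {j | j ≤ k ∧ T.IsBranchingValue j}.Nonempty := ⟨1, hk, T.one_isBranching hH⟩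
  have hbdd : BddAbove {j | j ≤ k ∧ T.IsBranchingValue j} := ⟨k, fun j hj => hj.1⟩
  have hmem := Nat.sSup_mem hne hbdd
  exact ⟨hmem.1, hmem.2, fun j hj hbr => le_csSup hbdd ⟨hj, hbr⟩⟩

lemma kplus_spec {k : ℕ} (hkn : k ≤ T.leaves.ncard) :
    k ≤ T.kplus k ∧ T.IsBranchingValue (T.kplus k) ∧
      ∀ j, k ≤ j → T.IsBranchingValue j → T.kplus k ≤ j := by
  have hne : {j | k ≤ j ∧ T.IsBranchingValue j}.Nonempty :=
    ⟨T.leaves.ncard, hkn, T.n_isBranching hH⟩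
  have hmem := Nat.sInf_mem hne
  exact ⟨hmem.1, hmem.2, fun j hj hbr => Nat.sInf_le ⟨hj, hbr⟩⟩

lemma ccount_gt_of_lt_dm {k : ℕ} (hk : 1 ≤ k) {t : ℝ} (ht0 : 0 ≤ t)
    (ht : t < T.branchDist (T.kminus k)) : k < T.ccount t := by
  obtain ⟨hle, hbr, hmax⟩ := T.kminus_spec hH hk
  obtain ⟨hdm0, hcdm⟩ := T.branchDist_spec hH hbr
  by_contra hc
  push_neg at hc
  have hbrt : T.IsBranchingValue (T.ccount t) := ⟨t, ht0, rfl⟩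
  have h1 : T.ccount t ≤ T.kminus k := hmax _ hc hbrt
  have h2 : T.kminus k ≤ T.ccount t := by
    rw [← hcdm]; exact T.ccount_antitone hH ht0 ht.le
  have heq : T.ccount t = T.kminus k := le_antisymm h1 h2
  have : T.branchDist (T.kminus k) ≤ t := csInf_le ⟨0, fun d hd => hd.1⟩ ⟨ht0, heq⟩
  linarith

lemma dp_le_dm {k : ℕ} (hk : 1 ≤ k) (hkn : k ≤ T.leaves.ncard) :
    T.branchDist (T.kplus k) ≤ T.branchDist (T.kminus k) := by
  obtain ⟨hkm, hbrm, _⟩ := T.kminus_spec hH hk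
  obtain ⟨hkp, hbrp, hminp⟩ := T.kplus_spec hH hkn
  obtain ⟨hdm0, hcdm⟩ := T.branchDist_spec hH hbrm
  obtain ⟨hdp0, hcdp⟩ := T.branchDist_spec hH hbrp
  by_contra hc
  push_neg at hc
  have h1 : T.ccount (T.branchDist (T.kplus k)) ≤ T.ccount (T.branchDist (T.kminus k)) :=
    T.ccount_antitone hH hdm0 hc.le
  rw [hcdm, hcdp] at h1
  have heq : T.kminus k = T.kplus k := by omega
  have : T.branchDist (T.kplus k) ≤ T.branchDist (T.kminus k) :=
    csInf_le ⟨0, fun d hd => hd.1⟩ ⟨hdm0, by rw [hcdm, heq]⟩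
  linarith

lemma ccount_between {k : ℕ} (hk : 1 ≤ k) (hkn : k ≤ T.leaves.ncard) {t : ℝ}
    (hdp : T.branchDist (T.kplus k) ≤ t) (hdm : t < T.branchDist (T.kminus k)) :
    T.ccount t = T.kplus k := by
  obtain ⟨hkp, hbrp, hminp⟩ := T.kplus_spec hH hkn
  obtain ⟨hdp0, hcdp⟩ := T.branchDist_spec hH hbrp
  have ht0 : 0 ≤ t := le_trans hdp0 hdp
  have h1 : T.ccount t ≤ T.kplus k := by
    rw [← hcdp]; exact T.ccount_antitone hH hdp0 hdp
  have h2 : T.kplus k ≤ T.ccount t :=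
    hminp _ (T.ccount_gt_of_lt_dm hH hk ht0 hdm).le ⟨t, ht0, rfl⟩
  omega

omit hH in
lemma gcnt_le_ncard (d : ℝ) (Y : Set V) : T.gcnt d Y ≤ Y.ncard :=
  Set.ncard_image_le (Set.toFinite _)

lemma gcnt_le_ccount {Y : Set V} (hY : Y ⊆ T.leaves) {d : ℝ} (hd : 0 ≤ d) :
    T.gcnt d Y ≤ T.ccount d := by
  rw [T.ccount_eq hH, gcnt]
  apply Set.ncard_le_ncard _ (Set.toFinite _)
  rintro _ ⟨y, hy, rfl⟩
  exact (T.topF_spec (T.leaf_mem_R hH hd (hY hy))).2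

lemma meet_iff {d : ℝ} {A : Set V} :
    (∀ C ∈ T.components (T.R d), (A ∩ C).Nonempty) ↔
      (∀ m ∈ T.Mx d, ∃ a ∈ A, T.anc m a) := by
  rw [T.components_eq hH]
  constructor
  · intro h m hm
    obtain ⟨a, ha⟩ := h _ ⟨m, hm, rfl⟩
    exact ⟨a, ha.1, ha.2⟩
  · rintro h C ⟨m, hm, rfl⟩
    obtain ⟨a, haA, hanc⟩ := h m hm
    exact ⟨a, haA, hanc⟩

lemma sub_iff {d : ℝ} {A : Set V} :
    (∀ C ∈ T.components (T.R d), (A ∩ C).Subsingleton) ↔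
      (∀ m ∈ T.Mx d, ∀ a ∈ A, ∀ b ∈ A, T.anc m a → T.anc m b → a = b) := by
  rw [T.components_eq hH]
  constructor
  · intro h m hm a ha b hb hma hmb
    exact h _ ⟨m, hm, rfl⟩ ⟨ha, hma⟩ ⟨hb, hmb⟩
  · rintro h C ⟨m, hm, rfl⟩ a ⟨ha, hma⟩ b ⟨hb, hmb⟩
    exact h m hm a ha b hb hma hmb

lemma gA_eq {k : ℕ} {A : Set V} (hA : A ⊆ T.leaves) (hcard : A.ncard = k)
    (hk : 1 ≤ k) (hkn : k ≤ T.leaves.ncard)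
    (h1 : ∀ m ∈ T.Mx (T.branchDist (T.kminus k)), ∃ a ∈ A, T.anc m a)
    (h2 : ∀ m ∈ T.Mx (T.branchDist (T.kplus k)),
      ∀ a ∈ A, ∀ b ∈ A, T.anc m a → T.anc m b → a = b)
    {t : ℝ} (ht0 : 0 ≤ t) (htH : t < H) : T.gcnt t A = min k (T.ccount t) := by
  obtain ⟨hkm, hbrm, _⟩ := T.kminus_spec hH hk
  obtain ⟨hkp, hbrp, hminp⟩ := T.kplus_spec hH hkn
  obtain ⟨hdm0, hcdm⟩ := T.branchDist_spec hH hbrm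
  obtain ⟨hdp0, hcdp⟩ := T.branchDist_spec hH hbrp
  set dm := T.branchDist (T.kminus k) with hdmdef
  set dp := T.branchDist (T.kplus k) with hdpdef
  by_cases hcase : dm ≤ t
  · -- A meets every component of `T[R t]`
    have hct : T.ccount t ≤ k := by
      have := T.ccount_antitone hH hdm0 hcase
      omega
    have himg : T.topF t '' A = T.Mx t := by
      apply Set.Subset.antisymm
      · rintro _ ⟨a, ha, rfl⟩
        exact (T.topF_spec (T.leaf_mem_R hH ht0 (hA ha))).2
      · intro m hm
        obtain ⟨x, hx, hanc⟩ := T.exists_leaf_desc m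
        have hxR : x ∈ T.R dm := T.leaf_mem_R hH hdm0 hx
        obtain ⟨hanc0, hMx0⟩ := T.topF_spec hxR
        obtain ⟨a, haA, hanc0a⟩ := h1 _ hMx0
        have hma : T.anc m a := by
          rcases T.anc_comparable hanc hanc0 with hc | hc
          · exact T.anc_trans hc hanc0a
          · by_cases hcm : T.topF dm x = m
            · rw [← hcm]; exact hanc0a
            · exfalso
              have hmroot : m ≠ T.root := by
                intro hr
                have : T.root ∈ T.R t := hr ▸ hm.1
                rw [T.root_mem_R_iff hH] at this
                linarith
              obtain ⟨p, hp⟩ := Option.isSome_iff_exists.mp (T.parent_isSome m hmroot)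
              have hcp : T.anc (T.topF dm x) p := T.anc_step_first hc hcm hp
              have : p ∈ T.R t :=
                T.R_desc_closed hH (T.R_mono hH hcase hMx0.1) hcp
              exact hm.2 p hp this
        exact ⟨a, haA, T.topF_eq hH hma hm⟩
    rw [gcnt, himg, ← T.ccount_eq hH, min_eq_right hct]
  · push_neg at hcase
    have hck : k < T.ccount t := T.ccount_gt_of_lt_dm hH hk ht0 hcase
    have hinjp : Set.InjOn (T.topF dp) A := by
      intro a ha b hb hab
      have haR : a ∈ T.R dp := T.leaf_mem_R hH hdp0 (hA ha)
      have hbR : b ∈ T.R dp := T.leaf_mem_R hH hdp0 (hA hb)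
      obtain ⟨hanca, hMxa⟩ := T.topF_spec haR
      obtain ⟨hancb, _⟩ := T.topF_spec hbR
      rw [← hab] at hancb
      exact h2 _ hMxa a ha b hb hanca hancb
    have hinjt : Set.InjOn (T.topF t) A := by
      by_cases hts : t ≤ dp
      · intro a ha b hb hab
        have haR : a ∈ T.R t := T.leaf_mem_R hH ht0 (hA ha)
        have hbR : b ∈ T.R t := T.leaf_mem_R hH ht0 (hA hb)
        obtain ⟨hanca, hMxa⟩ := T.topF_spec haR
        obtain ⟨hancb, _⟩ := T.topF_spec hbR
        rw [← hab] at hancb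
        have hmR : T.topF t a ∈ T.R dp := T.R_mono hH hts hMxa.1
        obtain ⟨hanc', hMx'⟩ := T.topF_spec hmR
        exact h2 _ hMx' a ha b hb (T.anc_trans hanc' hanca) (T.anc_trans hanc' hancb)
      · push_neg at hts
        have hcc : T.ccount dp = T.ccount t := by
          rw [hcdp, T.ccount_between hH hk hkn hts.le hcase]
        have hinjM : Set.InjOn (T.topF t) (T.Mx dp) :=
          T.injOn_topF_Mx hH hdp0 hts.le hcc
        intro a ha b hb hab
        have haR : a ∈ T.R dp := T.leaf_mem_R hH hdp0 (hA ha)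
        have hbR : b ∈ T.R dp := T.leaf_mem_R hH hdp0 (hA hb)
        obtain ⟨hanca, hMxa⟩ := T.topF_spec haR
        obtain ⟨hancb, hMxb⟩ := T.topF_spec hbR
        have hrwa : T.topF t a = T.topF t (T.topF dp a) :=
          T.topF_anc hH hanca (T.R_mono hH hts.le hMxa.1)
        have hrwb : T.topF t b = T.topF t (T.topF dp b) :=
          T.topF_anc hH hancb (T.R_mono hH hts.le hMxb.1)
        rw [hrwa, hrwb] at hab
        exact hinjp ha hb (hinjM hMxa hMxb hab)
    rw [gcnt, Set.ncard_image_of_injOn hinjt, hcard, min_eq_left hck.le]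

lemma exists_B {k : ℕ} (hk : 1 ≤ k) (hkn : k ≤ T.leaves.ncard) :
    ∃ B : Set V, B ⊆ T.leaves ∧ B.ncard = k ∧
      (∀ m ∈ T.Mx (T.branchDist (T.kminus k)), ∃ b ∈ B, T.anc m b) ∧
      (∀ m ∈ T.Mx (T.branchDist (T.kplus k)),
        ∀ a ∈ B, ∀ b ∈ B, T.anc m a → T.anc m b → a = b) := by
  classical
  obtain ⟨hkm, hbrm, _⟩ := T.kminus_spec hH hk
  obtain ⟨hkp, hbrp, _⟩ := T.kplus_spec hH hkn
  obtain ⟨hdm0, hcdm⟩ := T.branchDist_spec hH hbrm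
  obtain ⟨hdp0, hcdp⟩ := T.branchDist_spec hH hbrp
  set dm := T.branchDist (T.kminus k) with hdmdef
  set dp := T.branchDist (T.kplus k) with hdpdef
  have hdpm : dp ≤ dm := T.dp_le_dm hH hk hkn
  have hsurj : T.topF dm '' T.Mx dp = T.Mx dm := T.topF_image_Mx hH hdp0 hdpm
  set σ : V → V := fun m =>
    if h : ∃ m', m' ∈ T.Mx dp ∧ T.topF dm m' = m then h.choose else m with hσ
  have hσspec : ∀ m ∈ T.Mx dm, σ m ∈ T.Mx dp ∧ T.topF dm (σ m) = m := by
    intro m hm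
    have hex : ∃ m', m' ∈ T.Mx dp ∧ T.topF dm m' = m := by
      rw [← hsurj] at hm
      obtain ⟨m', hm', he⟩ := hm
      exact ⟨m', hm', he⟩
    rw [hσ]
    simp only
    rw [dif_pos hex]
    exact hex.choose_spec
  have hσinj : Set.InjOn σ (T.Mx dm) := by
    intro a ha b hb hab
    have h1 := (hσspec a ha).2
    rw [hab, (hσspec b hb).2] at h1
    exact h1.symm
  have hS : (σ '' T.Mx dm).ncard = T.kminus k := by
    rw [Set.ncard_image_of_injOn hσinj, ← T.ccount_eq hH, hcdm]
  have hsub : σ '' T.Mx dm ⊆ T.Mx dp := by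
    rintro _ ⟨m, hm, rfl⟩; exact (hσspec m hm).1
  have hcard2 : k ≤ (T.Mx dp).ncard := by
    rw [← T.ccount_eq hH, hcdp]; exact hkp
  obtain ⟨S', hS'1, hS'2, hS'3⟩ :=
    Set.exists_subsuperset_card_eq hsub (by rw [hS]; exact hkm) hcard2
  set β : V → V := fun m => (T.exists_leaf_desc m).choose with hβ
  have hβspec : ∀ m, T.IsLeaf (β m) ∧ T.anc m (β m) := fun m => (T.exists_leaf_desc m).choose_spec
  have hβinj : Set.InjOn β (T.Mx dp) := by
    intro a ha b hb hab
    exact T.top_unique hH (hβspec a).2 ha (hab ▸ (hβspec b).2) hb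
  refine ⟨β '' S', ?_, ?_, ?_, ?_⟩
  · rintro _ ⟨m, _, rfl⟩; exact (hβspec m).1
  · rw [Set.ncard_image_of_injOn (hβinj.mono hS'2), hS'3]
  · intro m hm
    refine ⟨β (σ m), ⟨σ m, hS'1 ⟨m, hm, rfl⟩, rfl⟩, ?_⟩
    have hσR : σ m ∈ T.R dm := T.R_mono hH hdpm (hσspec m hm).1.1
    have hs := (T.topF_spec hσR).1
    rw [(hσspec m hm).2] at hs
    exact T.anc_trans hs (hβspec (σ m)).2
  · rintro m hm _ ⟨m1, hm1, rfl⟩ _ ⟨m2, hm2, rfl⟩ hma hmb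
    have e1 : m = m1 := T.top_unique hH hma hm (hβspec m1).2 (hS'2 hm1)
    have e2 : m = m2 := T.top_unique hH hmb hm (hβspec m2).2 (hS'2 hm2)
    rw [← e1, ← e2]

lemma strict_fail {k : ℕ} {A : Set V} (hA : A ⊆ T.leaves) (hcard : A.ncard = k)
    (hk : 1 ≤ k) (hkn : k ≤ T.leaves.ncard)
    (hfail : ¬((∀ m ∈ T.Mx (T.branchDist (T.kminus k)), ∃ a ∈ A, T.anc m a) ∧
      (∀ m ∈ T.Mx (T.branchDist (T.kplus k)),
        ∀ a ∈ A, ∀ b ∈ A, T.anc m a → T.anc m b → a = b))) :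
    ∃ t₀ ∈ (T.thr H).filter (fun t => t < H), T.gcnt t₀ A < min k (T.ccount t₀) := by
  obtain ⟨hkm, hbrm, _⟩ := T.kminus_spec hH hk
  obtain ⟨hkp, hbrp, _⟩ := T.kplus_spec hH hkn
  obtain ⟨hdm0, hcdm⟩ := T.branchDist_spec hH hbrm
  obtain ⟨hdp0, hcdp⟩ := T.branchDist_spec hH hbrp
  set dm := T.branchDist (T.kminus k) with hdmdef
  set dp := T.branchDist (T.kplus k) with hdpdef
  rw [not_and_or] at hfail
  rcases hfail with hf | hf
  · push_neg at hf
    obtain ⟨m, hm, hno⟩ := hf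
    have hAne : A.Nonempty := Set.nonempty_of_ncard_ne_zero (by omega)
    have hdmH : dm < H := by
      by_contra h
      push_neg at h
      rw [T.Mx_top hH h, Set.mem_singleton_iff] at hm
      obtain ⟨a, ha⟩ := hAne
      exact hno a ha (hm ▸ T.anc_root a)
    refine ⟨dm, Finset.mem_filter.mpr ⟨T.branchDist_mem_thr hH hbrm, hdmH⟩, ?_⟩
    have hss : T.topF dm '' A ⊂ T.Mx dm := by
      constructor
      · rintro _ ⟨a, ha, rfl⟩
        exact (T.topF_spec (T.leaf_mem_R hH hdm0 (hA ha))).2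
      · intro hsup
        obtain ⟨a, ha, he⟩ := hsup hm
        apply hno a ha
        rw [← he]
        exact (T.topF_spec (T.leaf_mem_R hH hdm0 (hA ha))).1
    have hlt := Set.ncard_lt_ncard hss (Set.toFinite _)
    have hgc : T.gcnt dm A < T.ccount dm := by
      rw [gcnt, T.ccount_eq hH]; exact hlt
    have hmin : min k (T.ccount dm) = T.ccount dm := min_eq_right (by rw [hcdm]; exact hkm)
    omega
  · push_neg at hf
    obtain ⟨m, hm, a, ha, b, hb, hma, hmb, hne⟩ := hf
    have hdpH : dp < H := by
      by_contra h
      push_neg at h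
      have h1 : T.ccount dp = 1 := T.ccount_top hH h
      rw [hcdp] at h1
      have hk1 : k = 1 := by omega
      obtain ⟨x, hx⟩ := Set.ncard_eq_one.mp (by rw [hcard, hk1] : A.ncard = 1)
      rw [hx, Set.mem_singleton_iff] at ha hb
      exact hne (ha.trans hb.symm)
    refine ⟨dp, Finset.mem_filter.mpr ⟨T.branchDist_mem_thr hH hbrp, hdpH⟩, ?_⟩
    have hta : T.topF dp a = m := T.topF_eq hH hma hm
    have htb : T.topF dp b = m := T.topF_eq hH hmb hm
    have himg : T.topF dp '' A = T.topF dp '' (A \ {b}) := by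
      apply Set.Subset.antisymm
      · rintro _ ⟨c, hc, rfl⟩
        by_cases hcb : c = b
        · subst hcb
          exact ⟨a, ⟨ha, by simp [hne]⟩, by rw [hta, htb]⟩
        · exact ⟨c, ⟨hc, hcb⟩, rfl⟩
      · exact Set.image_mono Set.diff_subset
    have hcount : T.gcnt dp A ≤ k - 1 := by
      rw [gcnt, himg]
      calc (T.topF dp '' (A \ {b})).ncard ≤ (A \ {b}).ncard :=
            Set.ncard_image_le (Set.toFinite _)
        _ = k - 1 := by
            rw [Set.ncard_diff_singleton_of_mem hb, hcard]
    have hmin : min k (T.ccount dp) = k := min_eq_left (by rw [hcdp]; exact hkp)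
    omega

end Ultra

end PhyloTree

/-- Theorem 1 of the paper.  For an ultrametric rooted
phylogenetic tree, a set `A` of `k` leaves is a size-`k` maxPD set if and only
if `A` contains at least one leaf from each component of `T[R(d_{k⁻})]` and at
most one leaf from each component of `T[R(d_{k⁺})]`. -/
theorem isMaxPD_iff_components
    {V : Type} [Fintype V] [DecidableEq V] (T : PhyloTree V)
    (hU : T.Ultrametric) (A : Set V) (hA : A ⊆ T.leaves) (k : ℕ)
    (hcard : A.ncard = k) (hk : 1 ≤ k) (hkn : k ≤ T.leaves.ncard) :
    T.IsMaxPD k A ↔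
      (∀ C ∈ T.components (T.R (T.branchDist (T.kminus k))), (A ∩ C).Nonempty) ∧
      (∀ C ∈ T.components (T.R (T.branchDist (T.kplus k))), (A ∩ C).Subsingleton) := by
  classical
  obtain ⟨x₀, hx₀, _⟩ := T.exists_leaf_desc T.root
  set H := T.hgt x₀ with hHdef
  have hH : ∀ x, T.IsLeaf x → T.hgt x = H := fun x hx => hU x x₀ hx hx₀
  rw [T.meet_iff hH, T.sub_iff hH]
  have hwpos : ∀ t ∈ (T.thr H).filter (fun t => t < H), 0 < nxtF (T.thr H) t - t := by
    intro t ht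
    rw [Finset.mem_filter] at ht
    obtain ⟨_, h2, _⟩ := nxtF_spec (T.H_mem_thr (H := H)) ht.2
    linarith
  constructor
  · intro hmax
    by_contra hfail
    obtain ⟨t₀, ht₀, hstrict⟩ := T.strict_fail hH hA hcard hk hkn hfail
    obtain ⟨B, hB, hBcard, hB1, hB2⟩ := T.exists_B hH hk hkn
    have hPD : T.PD A < T.PD B := by
      rw [T.PD_eq hH hA, T.PD_eq hH hB]
      apply Finset.sum_lt_sum
      · intro t ht
        have ht' := Finset.mem_filter.mp ht
        rw [T.gA_eq hH hB hBcard hk hkn hB1 hB2 (T.thr_nonneg hH ht'.1) ht'.2]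
        have hgA : T.gcnt t A ≤ min k (T.ccount t) :=
          le_min (by rw [← hcard]; exact T.gcnt_le_ncard t A)
            (T.gcnt_le_ccount hH hA (T.thr_nonneg hH ht'.1))
        have hcast : (T.gcnt t A : ℝ) ≤ ((min k (T.ccount t) : ℕ) : ℝ) := by exact_mod_cast hgA
        exact mul_le_mul_of_nonneg_left hcast (hwpos t ht).le
      · refine ⟨t₀, ht₀, ?_⟩
        have ht' := Finset.mem_filter.mp ht₀
        rw [T.gA_eq hH hB hBcard hk hkn hB1 hB2 (T.thr_nonneg hH ht'.1) ht'.2]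
        have hcast : (T.gcnt t₀ A : ℝ) < ((min k (T.ccount t₀) : ℕ) : ℝ) := by
          exact_mod_cast hstrict
        exact mul_lt_mul_of_pos_left hcast (hwpos t₀ ht₀)
    have := hmax.2.2 B hB hBcard
    linarith
  · rintro ⟨h1, h2⟩
    refine ⟨hA, hcard, fun Y hY hYcard => ?_⟩
    rw [T.PD_eq hH hY, T.PD_eq hH hA]
    apply Finset.sum_le_sum
    intro t ht
    have ht' := Finset.mem_filter.mp ht
    rw [T.gA_eq hH hA hcard hk hkn h1 h2 (T.thr_nonneg hH ht'.1) ht'.2]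
    have hgY : T.gcnt t Y ≤ min k (T.ccount t) :=
      le_min (by rw [← hYcard]; exact T.gcnt_le_ncard t Y)
        (T.gcnt_le_ccount hH hY (T.thr_nonneg hH ht'.1))
    have hcast : (T.gcnt t Y : ℝ) ≤ ((min k (T.ccount t) : ℕ) : ℝ) := by exact_mod_cast hgY
    exact mul_le_mul_of_nonneg_left hcast (hwpos t ht).le
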